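/- arXiv:2506.04670 — 2 statements merged into one kernel-verified Lean document; each statement's English description precedes it below -/
import Mathlib

section
/- The Paley graph P(17) on the field of 17 elements is 1-geodesic transitive but not 2-geodesic transitive: Aut(P(17)) acts transitively on the vertices and on the ordered pairs of adjacent vertices of P(17), but there exist two 2-geodesics of P(17) that are not mapped to one another by any automorphism of P(17). -/
open SimpleGraph

def paleyGraph (F : Type*) [Field F] [Fintype F] (h : Fintype.card F % 4 = 1) :
    SimpleGraph F where
  Adj u v := u ≠ v ∧ ∃ s : F, u - v = s ^ 2
  symm := by
    constructor
    rintro u v ⟨huv, s, hs⟩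
    refine ⟨huv.symm, ?_⟩
    obtain ⟨i, hi⟩ : IsSquare (-1 : F) :=
      (FiniteField.isSquare_neg_one_iff).2 (by omega)
    exact ⟨i * s, by linear_combination -hs + s ^ 2 * hi⟩
  loopless := ⟨fun u h => h.1 rfl⟩

variable {V : Type*}

def SimpleGraph.autGroup (Γ : SimpleGraph V) : Subgroup (Equiv.Perm V) where
  carrier := {f | ∀ u v : V, Γ.Adj (f u) (f v) ↔ Γ.Adj u v}
  one_mem' := by intro u v; simp
  mul_mem' := by
    intro f g hf hg u v
    simp only [Equiv.Perm.mul_apply]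
    rw [hf, hg]
  inv_mem' := by
    intro f hf u v
    have h := hf (f⁻¹ u) (f⁻¹ v)
    simpa using h.symm

instance : Fact (Nat.Prime 17) := ⟨by norm_num⟩

def paley17 : SimpleGraph (ZMod 17) := paleyGraph (ZMod 17) (by rw [ZMod.card])

lemma paley17_adj (u v : ZMod 17) :
    paley17.Adj u v ↔ u ≠ v ∧ ∃ s : ZMod 17, u - v = s ^ 2 := Iff.rfl

/-- The affine map `x ↦ c x + d` as a permutation of `ZMod 17`. -/
def affPerm (c : ZMod 17) (hc : c ≠ 0) (d : ZMod 17) : Equiv.Perm (ZMod 17) :=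
  (Equiv.mulLeft₀ c hc).trans (Equiv.addRight d)

@[simp] lemma affPerm_apply (c : ZMod 17) (hc : c ≠ 0) (d x : ZMod 17) :
    affPerm c hc d x = c * x + d := rfl

lemma affPerm_mem (r : ZMod 17) (hr : r ≠ 0) (d : ZMod 17) :
    affPerm (r ^ 2) (pow_ne_zero 2 hr) d ∈ paley17.autGroup := by
  intro u v
  simp only [paley17_adj, affPerm_apply]
  constructor
  · rintro ⟨hne, s, hs⟩
    refine ⟨fun h => hne (by rw [h]), s / r, ?_⟩
    field_simp
    linear_combination hs
  · rintro ⟨hne, s, hs⟩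
    refine ⟨fun h => hne ?_, r * s, by ring_nf; linear_combination r ^ 2 * hs⟩
    have : r ^ 2 * u = r ^ 2 * v := by linear_combination h
    exact mul_left_cancel₀ (pow_ne_zero 2 hr) this

lemma adj_sq_ne {u v : ZMod 17} (h : paley17.Adj u v) :
    ∃ s : ZMod 17, s ≠ 0 ∧ u - v = s ^ 2 := by
  obtain ⟨hne, s, hs⟩ := h
  refine ⟨s, fun h0 => hne ?_, hs⟩
  rw [h0] at hs
  simpa [sub_eq_zero] using hs

lemma adj01 : paley17.Adj 0 1 := by rw [paley17_adj]; decide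
lemma adj13 : paley17.Adj 1 3 := by rw [paley17_adj]; decide
lemma adj15 : paley17.Adj 1 5 := by rw [paley17_adj]; decide
lemma nadj03 : ¬ paley17.Adj 0 3 := by rw [paley17_adj]; decide
lemma nadj05 : ¬ paley17.Adj 0 5 := by rw [paley17_adj]; decide

lemma cn5 : ∀ w : ZMod 17, paley17.Adj w 0 → paley17.Adj w 1 → paley17.Adj w 5 → w = 9 := by
  simp only [paley17_adj]; decide

lemma cn3a : paley17.Adj 2 0 ∧ paley17.Adj 2 1 ∧ paley17.Adj 2 3 ∧
    paley17.Adj 16 0 ∧ paley17.Adj 16 1 ∧ paley17.Adj 16 3 := by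
  simp only [paley17_adj]; decide

lemma dist_two {u v w : ZMod 17} (h1 : paley17.Adj u v) (h2 : paley17.Adj v w)
    (h3 : ¬ paley17.Adj u w) (h4 : u ≠ w) : paley17.dist u w = 2 := by
  have hle : paley17.dist u w ≤ 2 := by
    simpa using paley17.dist_le (Walk.cons h1 (Walk.cons h2 Walk.nil))
  have hre : paley17.Reachable u w := ⟨Walk.cons h1 (Walk.cons h2 Walk.nil)⟩
  have h0 : paley17.dist u w ≠ 0 :=
    fun h => h4 (hre.dist_eq_zero_iff.mp h)
  have h1' : paley17.dist u w ≠ 1 :=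
    fun h => h3 ((dist_eq_one_iff_adj (G := paley17)).mp h)
  omega

/-- The Paley graph `P(17)` is `1`-geodesic transitive but not
`2`-geodesic transitive: its automorphism group is transitive on vertices and on
ordered pairs of adjacent vertices, but some two `2`-geodesics are not equivalent
under any automorphism. -/
theorem paley17_one_geodesic_transitive_not_two :
    (∀ u v : ZMod 17, ∃ g ∈ paley17.autGroup, g u = v) ∧
    (∀ u₀ u₁ v₀ v₁ : ZMod 17, paley17.Adj u₀ u₁ → paley17.Adj v₀ v₁ →
      ∃ g ∈ paley17.autGroup, g u₀ = v₀ ∧ g u₁ = v₁) ∧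
    ∃ u₀ u₁ u₂ v₀ v₁ v₂ : ZMod 17,
      (paley17.Adj u₀ u₁ ∧ paley17.Adj u₁ u₂ ∧ paley17.dist u₀ u₂ = 2) ∧
      (paley17.Adj v₀ v₁ ∧ paley17.Adj v₁ v₂ ∧ paley17.dist v₀ v₂ = 2) ∧
      ∀ g ∈ paley17.autGroup, ¬ (g u₀ = v₀ ∧ g u₁ = v₁ ∧ g u₂ = v₂) := by
  refine ⟨?_, ?_, ?_⟩
  · intro u v
    refine ⟨affPerm (1 ^ 2) (pow_ne_zero 2 one_ne_zero) (v - u),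
      affPerm_mem 1 one_ne_zero _, ?_⟩
    simp [affPerm_apply]
  · intro u₀ u₁ v₀ v₁ hu hv
    obtain ⟨s, hs0, hs⟩ := adj_sq_ne hu
    obtain ⟨t, ht0, ht⟩ := adj_sq_ne hv
    have hr0 : t / s ≠ 0 := div_ne_zero ht0 hs0
    refine ⟨affPerm ((t / s) ^ 2) (pow_ne_zero 2 hr0) (v₀ - (t / s) ^ 2 * u₀),
      affPerm_mem _ hr0 _, by simp [affPerm_apply], ?_⟩
    simp only [affPerm_apply]
    have : (t / s) ^ 2 * (u₀ - u₁) = t ^ 2 := by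
      rw [hs]; field_simp
    linear_combination ht - this
  · refine ⟨0, 1, 3, 0, 1, 5, ⟨adj01, adj13, dist_two adj01 adj13 nadj03 (by decide)⟩,
      ⟨adj01, adj15, dist_two adj01 adj15 nadj05 (by decide)⟩, ?_⟩
    rintro g hg ⟨h0, h1, h3⟩
    obtain ⟨a20, a21, a23, a160, a161, a163⟩ := cn3a
    have e2 : g 2 = 9 := by
      apply cn5
      · rw [← h0, hg]; exact a20
      · rw [← h1, hg]; exact a21
      · rw [← h3, hg]; exact a23
    have e16 : g 16 = 9 := by
      apply cn5
      · rw [← h0, hg]; exact a160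
      · rw [← h1, hg]; exact a161
      · rw [← h3, hg]; exact a163
    have : (2 : ZMod 17) = 16 := g.injective (e2.trans e16.symm)
    exact absurd this (by decide)
end

section
/- Let k ≥ 2 be an integer. Then the Odd graph O_k is geodesic transitive and 3-arc transitive: Aut(O_k) acts transitively on the vertices of O_k, on the set of i-geodesics of O_k for every 1 ≤ i ≤ diam(O_k) = k, and on the set of 3-arcs of O_k. -/
open SimpleGraph

variable {V : Type*}

/-- An `s`-geodesic of a graph: a sequence of `s+1` vertices, consecutively
adjacent, whose endpoints are at distance `s`. -/
def SimpleGraph.IsNGeodesic (Γ : SimpleGraph V) (s : ℕ) (u : Fin (s + 1) → V) : Prop :=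
  (∀ i : Fin s, Γ.Adj (u i.castSucc) (u i.succ)) ∧ Γ.dist (u 0) (u (Fin.last s)) = s

/-- `(G,s)`-geodesic transitivity: `G` is transitive on vertices and, for each
`1 ≤ i ≤ s`, the graph has an `i`-geodesic and `G` is transitive on `i`-geodesics. -/
def SimpleGraph.GeodesicTransitiveOn (Γ : SimpleGraph V) (G : Subgroup (Equiv.Perm V))
    (s : ℕ) : Prop :=
  (∀ u v : V, ∃ g ∈ G, g u = v) ∧
  ∀ i : ℕ, 1 ≤ i → i ≤ s →
    (∃ u : Fin (i + 1) → V, Γ.IsNGeodesic i u) ∧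
    ∀ u w : Fin (i + 1) → V, Γ.IsNGeodesic i u → Γ.IsNGeodesic i w →
      ∃ g ∈ G, ∀ j, g (u j) = w j

/-- The Odd graph `O_k`: vertices are the `k`-element subsets of a `(2k+1)`-element
set, two of them adjacent iff they are disjoint. -/
def oddGraph (k : ℕ) : SimpleGraph {s : Finset (Fin (2 * k + 1)) // s.card = k} where
  Adj U W := U ≠ W ∧ Disjoint U.1 W.1
  symm := ⟨fun U W ⟨h1, h2⟩ => ⟨h1.symm, h2.symm⟩⟩
  loopless := ⟨fun U hU => hU.1 rfl⟩

namespace OddAux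

open Finset

abbrev OV (k : ℕ) := {s : Finset (Fin (2 * k + 1)) // s.card = k}

variable {k : ℕ}

lemma card_compl' (U : OV k) : U.1ᶜ.card = k + 1 := by
  rw [Finset.card_compl, U.2]
  simp only [Fintype.card_fin]
  omega

lemma inter_card_le (U W : OV k) : (U.1 ∩ W.1).card ≤ k := by
  calc (U.1 ∩ W.1).card ≤ U.1.card := card_le_card inter_subset_left
  _ = k := U.2

lemma inter_card_eq_iff (U W : OV k) : (U.1 ∩ W.1).card = k ↔ U = W := by
  constructor
  · intro h
    have h1 : U.1 ∩ W.1 = U.1 :=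
      eq_of_subset_of_card_le inter_subset_left (by rw [h, U.2])
    have h2 : U.1 ⊆ W.1 := by rw [← h1]; exact inter_subset_right
    exact Subtype.ext (eq_of_subset_of_card_le h2 (by rw [U.2, W.2]))
  · rintro rfl; rw [inter_self]; exact U.2

lemma compl_inter_card (U W : OV k) :
    (U.1ᶜ ∩ W.1).card = k - (U.1 ∩ W.1).card := by
  have := card_inter_add_card_sdiff W.1 U.1
  rw [W.2] at this
  have h2 : W.1 \ U.1 = U.1ᶜ ∩ W.1 := by
    ext a; simp [mem_sdiff, mem_compl, and_comm]
  rw [h2] at this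
  rw [inter_comm] at this
  omega

lemma adj_iff (hk : 1 ≤ k) (U W : OV k) :
    (oddGraph k).Adj U W ↔ Disjoint U.1 W.1 := by
  constructor
  · exact fun h => h.2
  · intro h
    refine ⟨?_, h⟩
    rintro rfl
    rw [disjoint_self] at h
    have := U.2
    rw [h] at this
    simp at this
    omega

lemma adj_struct (hk : 1 ≤ k) {U W : OV k} (h : (oddGraph k).Adj U W) :
    ∃ x, x ∈ U.1ᶜ ∧ W.1 = U.1ᶜ.erase x ∧ x ∉ W.1 := by
  have hsub : W.1 ⊆ U.1ᶜ := by
    intro a ha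
    rw [mem_compl]
    exact fun hU => (Finset.disjoint_left.mp h.2) hU ha
  have hcard : (U.1ᶜ \ W.1).card = 1 := by
    rw [card_sdiff_of_subset hsub, card_compl' U, W.2]; omega
  obtain ⟨x, hx⟩ := Finset.card_eq_one.mp hcard
  have hW : W.1 = U.1ᶜ.erase x := by
    rw [← sdiff_singleton_eq_erase, ← hx, Finset.sdiff_sdiff_eq_self hsub]
  have hxm : x ∈ U.1ᶜ \ W.1 := by rw [hx]; exact mem_singleton_self x
  rw [mem_sdiff] at hxm
  exact ⟨x, hxm.1, hW, hxm.2⟩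

lemma vert_of_erase (hk : 1 ≤ k) (U : OV k) (x : Fin (2 * k + 1)) (hx : x ∈ U.1ᶜ) :
    (U.1ᶜ.erase x).card = k := by
  rw [card_erase_of_mem hx, card_compl' U]
  omega

lemma adj_of_erase (hk : 1 ≤ k) (U : OV k) (x : Fin (2 * k + 1)) (hx : x ∈ U.1ᶜ) :
    (oddGraph k).Adj U ⟨U.1ᶜ.erase x, vert_of_erase hk U x hx⟩ := by
  rw [adj_iff hk]
  refine Finset.disjoint_left.mpr fun a ha hae => ?_
  have := mem_of_mem_erase hae
  rw [mem_compl] at this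
  exact this ha

/-- distance profile function -/
def Dk (k s : ℕ) : ℕ := min (2 * (k - s)) (2 * s + 1)

lemma step_card (hk : 1 ≤ k) {U V : OV k} (W : OV k) (h : (oddGraph k).Adj U V) :
    (V.1 ∩ W.1).card = k - (U.1 ∩ W.1).card ∨
    (V.1 ∩ W.1).card + 1 = k - (U.1 ∩ W.1).card := by
  obtain ⟨x, hx, hV, hxV⟩ := adj_struct hk h
  have hVW : V.1 ∩ W.1 = (U.1ᶜ ∩ W.1).erase x := by rw [hV, erase_inter]
  by_cases hxW : x ∈ W.1
  · right
    rw [hVW, card_erase_of_mem (mem_inter.mpr ⟨hx, hxW⟩), compl_inter_card]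
    have hle := inter_card_le U W
    have hlt : (U.1 ∩ W.1).card < k := by
      by_contra hc
      have : (U.1 ∩ W.1).card = k := le_antisymm hle (le_of_not_gt hc)
      rw [inter_card_eq_iff] at this
      subst this
      have : x ∈ U.1ᶜ ∩ U.1 := mem_inter.mpr ⟨hx, hxW⟩
      simp at this
    omega
  · left
    rw [hVW, erase_eq_of_notMem (fun hc => hxW (mem_inter.mp hc).2), compl_inter_card]

lemma dk_le_walk (hk : 1 ≤ k) (W : OV k) :
    ∀ {U : OV k} (p : (oddGraph k).Walk U W), Dk k ((U.1 ∩ W.1).card) ≤ p.length := by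
  intro U p
  induction p with
  | nil =>
    rename_i u
    have hu : (u.1 ∩ u.1).card = k := by rw [inter_self]; exact u.2
    simp only [Walk.length_nil, Dk, hu]
    omega
  | @cons a b c h p ih =>
    have hs := step_card hk c h
    have hsa := inter_card_le a c
    have hsb := inter_card_le b c
    simp only [Walk.length_cons]
    simp only [Dk] at ih ⊢
    omega

lemma exists_walk (hk : 1 ≤ k) :
    ∀ (n : ℕ) (U W : OV k), Dk k ((U.1 ∩ W.1).card) ≤ n →
      ∃ p : (oddGraph k).Walk U W, p.length ≤ n := by
  intro n
  induction n with
  | zero =>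
    intro U W h
    have hle := inter_card_le U W
    have : (U.1 ∩ W.1).card = k := by simp [Dk] at h; omega
    rw [inter_card_eq_iff] at this
    subst this
    exact ⟨Walk.nil, by simp⟩
  | succ n ih =>
    intro U W h
    by_cases hUW : U = W
    · subst hUW; exact ⟨Walk.nil, by simp⟩
    set s := (U.1 ∩ W.1).card with hs
    have hle := inter_card_le U W
    have hlt : s < k := by
      rcases lt_or_eq_of_le hle with h' | h'
      · exact h'
      · exact absurd ((inter_card_eq_iff U W).mp h') hUW
    by_cases hcase : 2 * (k - s) ≤ 2 * s + 1
    · -- pick x ∈ Uᶜ ∩ W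
      have hne : (U.1ᶜ ∩ W.1).Nonempty := by
        rw [← card_pos, compl_inter_card]; omega
      obtain ⟨x, hx⟩ := hne
      rw [mem_inter] at hx
      set V : OV k := ⟨U.1ᶜ.erase x, vert_of_erase hk U x hx.1⟩ with hV
      have hadj := adj_of_erase hk U x hx.1
      have hVW : (U.1ᶜ.erase x ∩ W.1).card + 1 = k - s := by
        rw [erase_inter, card_erase_of_mem (mem_inter.mpr hx), compl_inter_card]
        omega
      have hd : Dk k ((U.1ᶜ.erase x ∩ W.1).card) ≤ n := by
        simp only [Dk] at h ⊢; omega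
      obtain ⟨p, hp⟩ := ih V W hd
      exact ⟨Walk.cons hadj p, by simp; omega⟩
    · -- pick x ∈ Uᶜ \ W
      have hne : (U.1ᶜ \ W.1).Nonempty := by
        rw [← card_pos]
        have h1 := card_inter_add_card_sdiff (U.1ᶜ) W.1
        rw [compl_inter_card, card_compl'] at h1
        omega
      obtain ⟨x, hx⟩ := hne
      rw [mem_sdiff] at hx
      set V : OV k := ⟨U.1ᶜ.erase x, vert_of_erase hk U x hx.1⟩ with hV
      have hadj := adj_of_erase hk U x hx.1
      have hVW : (U.1ᶜ.erase x ∩ W.1).card = k - s := by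
        rw [erase_inter, erase_eq_of_notMem (fun hc => hx.2 (mem_inter.mp hc).2), compl_inter_card]
      have hd : Dk k ((U.1ᶜ.erase x ∩ W.1).card) ≤ n := by
        simp only [Dk] at h ⊢; omega
      obtain ⟨p, hp⟩ := ih V W hd
      exact ⟨Walk.cons hadj p, by simp; omega⟩
lemma dist_eq (hk : 1 ≤ k) (U W : OV k) :
    (oddGraph k).dist U W = Dk k ((U.1 ∩ W.1).card) := by
  obtain ⟨p, hp⟩ := exists_walk hk (Dk k ((U.1 ∩ W.1).card)) U W le_rfl
  refine le_antisymm ((SimpleGraph.dist_le p).trans hp) ?_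
  obtain ⟨q, hq⟩ := p.reachable.exists_walk_length_eq_dist
  rw [← hq]
  exact dk_le_walk hk W q

lemma oddGraph_connected (hk : 1 ≤ k) : (oddGraph k).Connected := by
  have hne : Nonempty (OV k) := by
    refine ⟨⟨(Finset.range k).attachFin ?_, ?_⟩⟩
    · intro m hm; rw [Finset.mem_range] at hm; omega
    · rw [card_attachFin, card_range]
  haveI : Nonempty (OV k) := hne
  refine ⟨fun U W => ?_⟩
  obtain ⟨p, _⟩ := exists_walk hk (Dk k ((U.1 ∩ W.1).card)) U W le_rfl
  exact p.reachable

lemma dist_le_k (hk : 1 ≤ k) (U W : OV k) : (oddGraph k).dist U W ≤ k := by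
  rw [dist_eq hk]
  have := inter_card_le U W
  simp only [Dk]
  omega

/-- the explicit geodesic: sets of naturals -/
def geoSet (k j : ℕ) : Finset ℕ :=
  if Even j then Finset.Ico (j / 2) (j / 2 + k)
  else Finset.Ico 0 (j / 2) ∪ Finset.Ico (j / 2 + k + 1) (2 * k + 1)

lemma geoSet_lt (k j : ℕ) (hj : j ≤ k) : ∀ m ∈ geoSet k j, m < 2 * k + 1 := by
  intro m hm
  unfold geoSet at hm
  split at hm
  · rw [Finset.mem_Ico] at hm; omega
  · rw [Finset.mem_union, Finset.mem_Ico, Finset.mem_Ico] at hm; omega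

lemma geoSet_card (k j : ℕ) (hj : j ≤ k) : (geoSet k j).card = k := by
  unfold geoSet
  split
  · rw [Nat.card_Ico]; omega
  · rename_i hodd
    rw [Finset.card_union_of_disjoint, Nat.card_Ico, Nat.card_Ico]
    · omega
    · rw [Finset.disjoint_left]
      intro a ha hb
      rw [Finset.mem_Ico] at ha hb
      omega

def geoVert (k j : ℕ) (hj : j ≤ k) : OV k :=
  ⟨(geoSet k j).attachFin (geoSet_lt k j hj), by rw [card_attachFin]; exact geoSet_card k j hj⟩

lemma geoVert_adj (hk : 1 ≤ k) (j : ℕ) (hj : j + 1 ≤ k) :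
    (oddGraph k).Adj (geoVert k j (by omega)) (geoVert k (j + 1) hj) := by
  rw [adj_iff hk]
  rw [Finset.disjoint_left]
  intro a ha hb
  simp only [geoVert, mem_attachFin] at ha hb
  unfold geoSet at ha hb
  rcases Nat.even_or_odd j with he | ho
  · have h1 : ¬ Even (j + 1) := by simp [Nat.even_add_one, he]
    rw [if_pos he] at ha
    rw [if_neg h1] at hb
    have h2 : (j + 1) / 2 = j / 2 := by rcases he with ⟨m, hm⟩; omega
    rw [Finset.mem_Ico] at ha
    rw [Finset.mem_union, Finset.mem_Ico, Finset.mem_Ico] at hb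
    omega
  · have h1 : ¬ Even j := by simp [Nat.not_even_iff_odd.mpr ho]
    have h2 : Even (j + 1) := by simp [Nat.even_add_one, h1]
    rw [if_neg h1] at ha
    rw [if_pos h2] at hb
    have h3 : (j + 1) / 2 = j / 2 + 1 := by
      rcases ho with ⟨m, hm⟩; omega
    rw [Finset.mem_union, Finset.mem_Ico, Finset.mem_Ico] at ha
    rw [Finset.mem_Ico] at hb
    omega

lemma geoVert_dist (hk : 1 ≤ k) (i : ℕ) (hi : i ≤ k) :
    (oddGraph k).dist (geoVert k 0 (by omega)) (geoVert k i hi) = i := by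
  rw [dist_eq hk]
  have hint : ((geoVert k 0 (by omega)).1 ∩ (geoVert k i hi).1).card
      = (geoSet k 0 ∩ geoSet k i).card := by
    rw [← card_attachFin (geoSet k 0 ∩ geoSet k i)
      (fun m hm => geoSet_lt k 0 (by omega) m (Finset.mem_of_mem_inter_left hm))]
    congr 1
    ext a
    simp [geoVert, mem_attachFin]
  rw [hint]
  have h0 : geoSet k 0 = Finset.Ico 0 k := by simp [geoSet]
  rcases Nat.even_or_odd i with he | ho
  · have : geoSet k 0 ∩ geoSet k i = Finset.Ico (i / 2) k := by
      rw [h0]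
      unfold geoSet
      rw [if_pos he]
      ext a
      simp only [Finset.mem_inter, Finset.mem_Ico]
      omega
    rw [this, Nat.card_Ico]
    rcases he with ⟨m, hm⟩
    simp only [Dk]
    omega
  · have h1 : ¬ Even i := by simp [Nat.not_even_iff_odd.mpr ho]
    have : geoSet k 0 ∩ geoSet k i = Finset.Ico 0 (i / 2) := by
      rw [h0]
      unfold geoSet
      rw [if_neg h1]
      ext a
      simp only [Finset.mem_inter, Finset.mem_union, Finset.mem_Ico]
      omega
    rw [this, Nat.card_Ico]
    rcases ho with ⟨m, hm⟩
    simp only [Dk]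
    omega

/-! ### Permutations acting on vertices -/

def vmap (σ : Equiv.Perm (Fin (2 * k + 1))) (U : OV k) : OV k :=
  ⟨U.1.image σ, by rw [Finset.card_image_of_injective _ σ.injective]; exact U.2⟩

lemma vmap_vmap (σ τ : Equiv.Perm (Fin (2 * k + 1))) (U : OV k) :
    vmap τ (vmap σ U) = vmap (σ.trans τ) U := by
  apply Subtype.ext
  simp [vmap, Finset.image_image]

lemma vmap_id (U : OV k) : vmap (Equiv.refl _) U = U := by
  apply Subtype.ext
  simp [vmap]

def vmapPerm (σ : Equiv.Perm (Fin (2 * k + 1))) : Equiv.Perm (OV k) where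
  toFun := vmap σ
  invFun := vmap σ.symm
  left_inv := fun U => by rw [vmap_vmap]; simp [vmap_id]
  right_inv := fun U => by rw [vmap_vmap]; simp [vmap_id]

lemma vmap_inter_card (σ : Equiv.Perm (Fin (2 * k + 1))) (U W : OV k) :
    ((vmap σ U).1 ∩ (vmap σ W).1).card = (U.1 ∩ W.1).card := by
  simp only [vmap]
  rw [← Finset.image_inter _ _ σ.injective, Finset.card_image_of_injective _ σ.injective]

lemma vmapPerm_mem_aut (σ : Equiv.Perm (Fin (2 * k + 1))) :
    vmapPerm σ ∈ (oddGraph k).autGroup := by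
  intro U W
  show (oddGraph k).Adj (vmap σ U) (vmap σ W) ↔ (oddGraph k).Adj U W
  unfold oddGraph
  simp only
  constructor
  · rintro ⟨h1, h2⟩
    refine ⟨fun hc => h1 (by rw [hc]), ?_⟩
    have h2' : Disjoint (U.1.image σ) (W.1.image σ) := h2
    rw [Finset.disjoint_image σ.injective] at h2'
    exact h2'
  · rintro ⟨h1, h2⟩
    refine ⟨fun hc => h1 ((vmapPerm σ).injective hc), ?_⟩
    exact (Finset.disjoint_image σ.injective).mpr h2

lemma vmap_dist (hk : 1 ≤ k) (σ : Equiv.Perm (Fin (2 * k + 1))) (U W : OV k) :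
    (oddGraph k).dist (vmap σ U) (vmap σ W) = (oddGraph k).dist U W := by
  rw [dist_eq hk, dist_eq hk, vmap_inter_card]

lemma vmap_adj (hk : 1 ≤ k) (σ : Equiv.Perm (Fin (2 * k + 1))) {U W : OV k}
    (h : (oddGraph k).Adj U W) : (oddGraph k).Adj (vmap σ U) (vmap σ W) :=
  (vmapPerm_mem_aut σ U W).mpr h

/-- any two sets of equal cardinality are related by a permutation -/
lemma exists_perm_image {α : Type*} [Fintype α] [DecidableEq α] (s t : Finset α)
    (h : s.card = t.card) : ∃ σ : Equiv.Perm α, s.image σ = t := by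
  have hc : sᶜ.card = tᶜ.card := by rw [Finset.card_compl, Finset.card_compl, h]
  let e : {x // x ∈ s} ≃ {x // x ∈ t} := Finset.equivOfCardEq h
  let e' : {x // x ∈ sᶜ} ≃ {x // x ∈ tᶜ} := Finset.equivOfCardEq hc
  let e2 : {x // ¬ x ∈ s} ≃ {x // ¬ x ∈ t} :=
    ((Equiv.subtypeEquivRight (fun x => (Finset.mem_compl).symm)).trans e').trans
      (Equiv.subtypeEquivRight (fun x => Finset.mem_compl))
  let σ : Equiv.Perm α :=
    ((Equiv.sumCompl (· ∈ s)).symm.trans (Equiv.sumCongr e e2)).trans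
      (Equiv.sumCompl (· ∈ t))
  refine ⟨σ, ?_⟩
  have hsub : s.image σ ⊆ t := by
    intro a ha
    rw [Finset.mem_image] at ha
    obtain ⟨b, hb, rfl⟩ := ha
    have : σ b = ((e ⟨b, hb⟩ : {x // x ∈ t}) : α) := by
      simp only [σ, Equiv.trans_apply]
      rw [Equiv.sumCompl_symm_apply_of_pos hb]
      rfl
    rw [this]
    exact (e ⟨b, hb⟩).2
  apply Finset.eq_of_subset_of_card_le hsub
  rw [Finset.card_image_of_injective _ σ.injective, h]

lemma swap_image {α : Type*} [DecidableEq α] (x y : α) (s : Finset α)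
    (h : x ∈ s ↔ y ∈ s) : s.image (Equiv.swap x y) = s := by
  have hsub : s.image (Equiv.swap x y) ⊆ s := by
    intro a ha
    rw [Finset.mem_image] at ha
    obtain ⟨b, hb, rfl⟩ := ha
    rcases eq_or_ne b x with rfl | hbx
    · rw [Equiv.swap_apply_left]; exact h.mp hb
    rcases eq_or_ne b y with rfl | hby
    · rw [Equiv.swap_apply_right]; exact h.mpr hb
    · rw [Equiv.swap_apply_of_ne_of_ne hbx hby]; exact hb
  exact Finset.eq_of_subset_of_card_le hsub
    (le_of_eq (Finset.card_image_of_injective _ (Equiv.swap x y).injective).symm)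

lemma perm_image_compl {α : Type*} [Fintype α] [DecidableEq α] (σ : Equiv.Perm α)
    (s : Finset α) : sᶜ.image σ = (s.image σ)ᶜ := by
  have hdisj : Disjoint (sᶜ.image σ) (s.image σ) :=
    (Finset.disjoint_image σ.injective).mpr (disjoint_compl_left)
  have hsub : sᶜ.image σ ⊆ (s.image σ)ᶜ := by
    intro a ha
    rw [Finset.mem_compl]
    exact fun hc => (Finset.disjoint_left.mp hdisj) ha hc
  apply Finset.eq_of_subset_of_card_le hsub
  rw [Finset.card_compl, Finset.card_image_of_injective _ σ.injective,
    Finset.card_image_of_injective _ σ.injective, Finset.card_compl]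

/-! ### Chains and geodesic structure -/

lemma chain_dist_le (hk : 1 ≤ k) {i : ℕ} (v : ℕ → OV k)
    (hadj : ∀ n < i, (oddGraph k).Adj (v n) (v (n + 1))) :
    ∀ m a, a + m ≤ i → (oddGraph k).dist (v a) (v (a + m)) ≤ m := by
  intro m
  induction m with
  | zero => intro a _; simp
  | succ m ih =>
    intro a ha
    have h1 := ih a (by omega)
    have h2 : (oddGraph k).dist (v (a + m)) (v (a + m + 1)) = 1 :=
      SimpleGraph.dist_eq_one_iff_adj.mpr (hadj (a + m) (by omega))
    calc (oddGraph k).dist (v a) (v (a + (m + 1)))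
        ≤ (oddGraph k).dist (v a) (v (a + m)) + (oddGraph k).dist (v (a + m)) (v (a + m + 1)) := by
          exact (oddGraph_connected hk).dist_triangle
      _ ≤ m + 1 := by omega

lemma chain_dist (hk : 1 ≤ k) {i : ℕ} (v : ℕ → OV k)
    (hadj : ∀ n < i, (oddGraph k).Adj (v n) (v (n + 1)))
    (hdist : (oddGraph k).dist (v 0) (v i) = i) :
    ∀ j ≤ i, (oddGraph k).dist (v 0) (v j) = j := by
  intro j hj
  have h1 : (oddGraph k).dist (v 0) (v j) ≤ j := by
    have := chain_dist_le hk v hadj j 0 (by omega)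
    simpa using this
  have h2 : (oddGraph k).dist (v j) (v i) ≤ i - j := by
    have := chain_dist_le hk v hadj (i - j) j (by omega)
    have hji : j + (i - j) = i := by omega
    rwa [hji] at this
  have h3 := (oddGraph_connected hk).dist_triangle (u := v 0) (v := v j) (w := v i)
  omega

/-- On a geodesic step, the removed element lies on the correct side of `U0`. -/
lemma step_mem (hk : 1 ≤ k) {A B U0 : OV k} {i : ℕ}
    (hAB : (oddGraph k).Adj A B)
    (hdA : (oddGraph k).dist U0 A = i) (hdB : (oddGraph k).dist U0 B = i + 1) :
    ∃ x, x ∈ A.1ᶜ ∧ B.1 = A.1ᶜ.erase x ∧ (x ∈ U0.1 ↔ ¬ Even i) := by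
  obtain ⟨x, hx, hB, hxB⟩ := adj_struct hk hAB
  refine ⟨x, hx, hB, ?_⟩
  rw [dist_eq hk] at hdA hdB
  have hsA : (U0.1 ∩ A.1).card ≤ k := inter_card_le U0 A
  have hsB : (U0.1 ∩ B.1).card ≤ k := inter_card_le U0 B
  have e1 : (U0.1 ∩ A.1).card = (A.1 ∩ U0.1).card := by rw [inter_comm]
  have e2 : (U0.1 ∩ B.1).card = (B.1 ∩ U0.1).card := by rw [inter_comm]
  have hlt : (A.1 ∩ U0.1).card < k ∨ x ∉ U0.1 := by
    by_cases hxU : x ∈ U0.1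
    · left
      have hle := inter_card_le A U0
      rcases lt_or_eq_of_le hle with h' | h'
      · exact h'
      · exfalso
        rw [inter_card_eq_iff] at h'
        subst h'
        exact (Finset.mem_compl.mp hx) hxU
    · right; exact hxU
  have hrel : (B.1 ∩ U0.1).card + (if x ∈ U0.1 then 1 else 0)
      = k - (A.1 ∩ U0.1).card := by
    rw [hB, erase_inter]
    by_cases hxU : x ∈ U0.1
    · rw [if_pos hxU, card_erase_of_mem (mem_inter.mpr ⟨hx, hxU⟩), compl_inter_card]
      rcases hlt with h' | h'
      · omega
      · exact absurd hxU h'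
    · rw [if_neg hxU, erase_eq_of_notMem (fun hc => hxU (mem_inter.mp hc).2),
        compl_inter_card]
      omega
  simp only [Dk] at hdA hdB
  by_cases hxU : x ∈ U0.1
  · rw [if_pos hxU] at hrel
    simp only [hxU, true_iff]
    rintro ⟨m, hm⟩
    omega
  · rw [if_neg hxU] at hrel
    simp only [hxU, false_iff, not_not]
    rcases Nat.even_or_odd i with he | ⟨m, hm⟩
    · exact he
    · exfalso; omega

/-- The alternation pattern lemma: an element whose membership in `v 0` and `v i`
is consistent with perfect alternation alternates perfectly along the geodesic. -/
lemma pattern (hk : 1 ≤ k) :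
    ∀ (i : ℕ) (v : ℕ → OV k),
      (∀ n < i, (oddGraph k).Adj (v n) (v (n + 1))) →
      (∀ j ≤ i, (oddGraph k).dist (v 0) (v j) = j) →
      ∀ c, ((c ∈ (v i).1) ↔ ((c ∈ (v 0).1) ↔ Even i)) →
      ∀ j ≤ i, ((c ∈ (v j).1) ↔ ((c ∈ (v 0).1) ↔ Even j)) := by
  intro i
  induction i with
  | zero =>
    intro v _ _ c hc j hj
    interval_cases j
    simpa using hc
  | succ i ih =>
    intro v hadj hdist c hc j hj
    by_cases hji : j = i + 1
    · subst hji; exact hc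
    have hj' : j ≤ i := by omega
    have hadj' : ∀ n < i, (oddGraph k).Adj (v n) (v (n + 1)) :=
      fun n hn => hadj n (by omega)
    have hdist' : ∀ j ≤ i, (oddGraph k).dist (v 0) (v j) = j :=
      fun j hj => hdist j (by omega)
    by_cases hcons : (c ∈ (v i).1) ↔ ((c ∈ (v 0).1) ↔ Even i)
    · exact ih v hadj' hdist' c hcons j hj'
    exfalso
    obtain ⟨x, hx, hB, hxpar⟩ := step_mem hk (hadj i (by omega))
      (hdist i (by omega)) (hdist (i + 1) (by omega))
    have hdisj : ∀ a, a ∈ (v i).1 → a ∉ (v (i + 1)).1 :=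
      fun a ha hb => (Finset.disjoint_left.mp (hadj i (by omega)).2) ha hb
    have hEi : Even (i + 1) ↔ ¬ Even i := by simp [Nat.even_add_one]
    have h1 : c ∉ (v i).1 := by
      intro h1
      have h2 := hdisj c h1
      rw [hEi] at hc
      tauto
    have h2 : c ∉ (v (i + 1)).1 := by
      intro h2
      rw [hEi] at hc
      tauto
    have hcx : c = x := by
      by_contra hne
      apply h2
      rw [hB]
      exact Finset.mem_erase.mpr ⟨hne, Finset.mem_compl.mpr h1⟩
    subst hcx
    rw [hEi] at hc
    tauto

/-- Core transitivity: any two chains of equal length `i ≤ k` that are geodesics are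
related by a permutation of the ground set. -/
lemma trans_geo (hk : 1 ≤ k) :
    ∀ (i : ℕ), i ≤ k → ∀ (u w : ℕ → OV k),
      (∀ n < i, (oddGraph k).Adj (u n) (u (n + 1))) →
      (oddGraph k).dist (u 0) (u i) = i →
      (∀ n < i, (oddGraph k).Adj (w n) (w (n + 1))) →
      (oddGraph k).dist (w 0) (w i) = i →
      ∃ σ : Equiv.Perm (Fin (2 * k + 1)), ∀ j ≤ i, vmap σ (u j) = w j := by
  intro i
  induction i with
  | zero =>
    intro _ u w _ _ _ _
    obtain ⟨σ, hσ⟩ := exists_perm_image (u 0).1 (w 0).1 (by rw [(u 0).2, (w 0).2])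
    refine ⟨σ, fun j hj => ?_⟩
    interval_cases j
    exact Subtype.ext hσ
  | succ i ih =>
    intro hik u w huadj hudist hwadj hwdist
    have hud := chain_dist hk u huadj hudist
    have hwd := chain_dist hk w hwadj hwdist
    obtain ⟨σ0, hσ0⟩ := ih (by omega) u w (fun n hn => huadj n (by omega))
      (hud i (by omega)) (fun n hn => hwadj n (by omega)) (hwd i (by omega))
    set u' : ℕ → OV k := fun n => vmap σ0 (u n) with hu'
    have hu'w : ∀ j ≤ i, u' j = w j := hσ0
    have hu'adj : ∀ n < i + 1, (oddGraph k).Adj (u' n) (u' (n + 1)) :=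
      fun n hn => vmap_adj hk σ0 (huadj n hn)
    have hu'd : ∀ j ≤ i + 1, (oddGraph k).dist (u' 0) (u' j) = j := by
      intro j hj
      show (oddGraph k).dist (vmap σ0 (u 0)) (vmap σ0 (u j)) = j
      rw [vmap_dist hk]
      exact hud j hj
    obtain ⟨x, hx, hBx, hxpar⟩ := step_mem hk (hu'adj i (by omega))
      (hu'd i (by omega)) (hu'd (i + 1) (by omega))
    obtain ⟨y, hy, hBy, hypar⟩ := step_mem hk (hwadj i (by omega))
      (hwd i (by omega)) (hwd (i + 1) (by omega))
    have h0 : u' 0 = w 0 := hu'w 0 (by omega)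
    have hiw : u' i = w i := hu'w i le_rfl
    have hxw0 : x ∈ (w 0).1 ↔ ¬ Even i := by rw [← h0]; exact hxpar
    have hyw0 : y ∈ (w 0).1 ↔ ¬ Even i := hypar
    have hxwi : x ∉ (w i).1 := by
      rw [← hiw]; exact Finset.mem_compl.mp hx
    have hywi : y ∉ (w i).1 := Finset.mem_compl.mp hy
    have hwadj' : ∀ n < i, (oddGraph k).Adj (w n) (w (n + 1)) :=
      fun n hn => hwadj n (by omega)
    have hwd' : ∀ j ≤ i, (oddGraph k).dist (w 0) (w j) = j :=
      fun j hj => hwd j (by omega)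
    have hxne : ¬ (x ∈ (w 0).1 ↔ Even i) := by
      intro hcc
      by_cases he : Even i
      · exact (hxw0.mp (hcc.mpr he)) he
      · exact he (hcc.mp (hxw0.mpr he))
    have hyne : ¬ (y ∈ (w 0).1 ↔ Even i) := by
      intro hcc
      by_cases he : Even i
      · exact (hyw0.mp (hcc.mpr he)) he
      · exact he (hcc.mp (hyw0.mpr he))
    have hpatx := pattern hk i w hwadj' hwd' x (iff_of_false hxwi hxne)
    have hpaty := pattern hk i w hwadj' hwd' y (iff_of_false hywi hyne)
    have hxyw0 : x ∈ (w 0).1 ↔ y ∈ (w 0).1 := hxw0.trans hyw0.symm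
    have hxy : ∀ j ≤ i, (x ∈ (w j).1 ↔ y ∈ (w j).1) := by
      intro j hj
      rw [hpatx j hj, hpaty j hj]
      exact iff_congr hxyw0 Iff.rfl
    refine ⟨σ0.trans (Equiv.swap x y), fun j hj => ?_⟩
    have hcomp : vmap (σ0.trans (Equiv.swap x y)) (u j)
        = vmap (Equiv.swap x y) (u' j) := (vmap_vmap σ0 (Equiv.swap x y) (u j)).symm
    rw [hcomp]
    by_cases hji : j ≤ i
    · rw [hu'w j hji]
      exact Subtype.ext (swap_image x y (w j).1 (hxy j hji))
    · have hj1 : j = i + 1 := by omega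
      subst hj1
      apply Subtype.ext
      show ((u' (i + 1)).1).image (Equiv.swap x y) = (w (i + 1)).1
      rw [hBx, hiw, hBy]
      rw [Finset.image_erase (Equiv.swap x y).injective]
      rw [perm_image_compl, swap_image x y (w i).1 (hxy i le_rfl), Equiv.swap_apply_left]

/-! ### Wrappers -/

lemma geoVert_congr (a b : ℕ) (hab : a = b) (ha : a ≤ k) (hb : b ≤ k) :
    geoVert k a ha = geoVert k b hb := by subst hab; rfl

lemma exists_geodesic (hk : 1 ≤ k) (i : ℕ) (hik : i ≤ k) :
    ∃ u : Fin (i + 1) → OV k, (oddGraph k).IsNGeodesic i u := by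
  refine ⟨fun j => geoVert k (min j.val k) (min_le_right _ _), ?_, ?_⟩
  · intro j
    have e1 : geoVert k (min (j.castSucc).val k) (min_le_right _ _)
        = geoVert k j.val (by omega) :=
      geoVert_congr _ _ (by simp; omega) _ _
    have e2 : geoVert k (min (j.succ).val k) (min_le_right _ _)
        = geoVert k (j.val + 1) (by omega) :=
      geoVert_congr _ _ (by simp; omega) _ _
    dsimp only
    rw [e1, e2]
    exact geoVert_adj hk j.val (by omega)
  · have e1 : geoVert k (min ((0 : Fin (i + 1))).val k) (min_le_right _ _)
        = geoVert k 0 (by omega) :=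
      geoVert_congr _ _ (by simp) _ _
    have e2 : geoVert k (min (Fin.last i).val k) (min_le_right _ _)
        = geoVert k i hik :=
      geoVert_congr _ _ (by simp [Fin.last]; omega) _ _
    dsimp only
    rw [e1, e2]
    exact geoVert_dist hk i hik

/-- transfer of a `Fin`-indexed geodesic to an `ℕ`-indexed chain -/
lemma chain_of_geodesic (hk : 1 ≤ k) {i : ℕ} (u : Fin (i + 1) → OV k)
    (h : (oddGraph k).IsNGeodesic i u) :
    ∃ uc : ℕ → OV k, (∀ j : Fin (i + 1), uc j.val = u j) ∧
      (∀ n < i, (oddGraph k).Adj (uc n) (uc (n + 1))) ∧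
      (oddGraph k).dist (uc 0) (uc i) = i := by
  refine ⟨fun n => u ⟨min n i, by omega⟩, fun j => ?_, fun n hn => ?_, ?_⟩
  · exact congrArg u (Fin.ext (by simp; omega))
  · have e1 : u ⟨min n i, by omega⟩ = u ((⟨n, hn⟩ : Fin i).castSucc) :=
      congrArg u (Fin.ext (by simp; omega))
    have e2 : u ⟨min (n + 1) i, by omega⟩ = u ((⟨n, hn⟩ : Fin i).succ) :=
      congrArg u (Fin.ext (by simp; omega))
    dsimp only
    rw [e1, e2]
    exact h.1 ⟨n, hn⟩
  · have e1 : u ⟨min 0 i, by omega⟩ = u 0 := congrArg u (Fin.ext (by simp))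
    have e2 : u ⟨min i i, by omega⟩ = u (Fin.last i) := congrArg u (Fin.ext (by simp))
    dsimp only
    rw [e1, e2]
    exact h.2

lemma geodesic_transitive (hk : 1 ≤ k) {i : ℕ} (hik : i ≤ k)
    (u w : Fin (i + 1) → OV k) (hu : (oddGraph k).IsNGeodesic i u)
    (hw : (oddGraph k).IsNGeodesic i w) :
    ∃ g ∈ (oddGraph k).autGroup, ∀ j, g (u j) = w j := by
  obtain ⟨uc, hucu, hucadj, hucd⟩ := chain_of_geodesic hk u hu
  obtain ⟨wc, hwcw, hwcadj, hwcd⟩ := chain_of_geodesic hk w hw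
  obtain ⟨σ, hσ⟩ := trans_geo hk i hik uc wc hucadj hucd hwcadj hwcd
  refine ⟨vmapPerm σ, vmapPerm_mem_aut σ, fun j => ?_⟩
  have h1 : vmapPerm σ (u j) = vmap σ (uc j.val) := by rw [hucu j]; rfl
  rw [h1, hσ j.val (by omega), hwcw j]

lemma vertex_transitive (hk : 1 ≤ k) (U W : OV k) :
    ∃ g ∈ (oddGraph k).autGroup, g U = W := by
  obtain ⟨σ, hσ⟩ := exists_perm_image U.1 W.1 (by rw [U.2, W.2])
  exact ⟨vmapPerm σ, vmapPerm_mem_aut σ, Subtype.ext hσ⟩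

lemma diam_eq (hk : 1 ≤ k) : (oddGraph k).diam = k := by
  have hub : (oddGraph k).ediam ≤ (k : ℕ∞) := by
    rw [SimpleGraph.ediam_def]
    refine iSup_le fun p => ?_
    obtain ⟨q, hq⟩ := exists_walk hk (Dk k ((p.1.1 ∩ p.2.1).card)) p.1 p.2 le_rfl
    refine le_trans (SimpleGraph.edist_le q) ?_
    rw [Nat.cast_le]
    refine hq.trans ?_
    have := inter_card_le p.1 p.2
    simp only [Dk]
    omega
  have hne : (oddGraph k).ediam ≠ ⊤ := fun hc => by
    rw [hc] at hub
    exact (by simp : ¬ (⊤ : ℕ∞) ≤ (k : ℕ∞)) hub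
  have h1 : (oddGraph k).diam ≤ k := by
    have := ENat.toNat_le_toNat hub (by simp)
    simpa [SimpleGraph.diam] using this
  have h2 : k ≤ (oddGraph k).diam := by
    have hd := geoVert_dist hk k le_rfl
    calc k = (oddGraph k).dist (geoVert k 0 (by omega)) (geoVert k k le_rfl) := hd.symm
    _ ≤ (oddGraph k).diam := SimpleGraph.dist_le_diam hne
  omega

/-! ### 3-arcs -/

lemma mem_iff_of_image {α : Type*} [DecidableEq α] {σ : Equiv.Perm α}
    {s t : Finset α} (h : s.image σ = t) {c : α} : c ∈ s ↔ σ c ∈ t := by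
  subst h
  constructor
  · exact fun hc => Finset.mem_image_of_mem σ hc
  · intro hc
    rw [Finset.mem_image] at hc
    obtain ⟨d, hd, hdc⟩ := hc
    rwa [← σ.injective hdc]

lemma image_trans {α : Type*} [DecidableEq α] (σ τ : Equiv.Perm α) (s : Finset α) :
    s.image (⇑(σ.trans τ)) = (s.image σ).image τ := by
  rw [Finset.image_image]; rfl

lemma exists_perm_data {α : Type*} [Fintype α] [DecidableEq α] (s t : Finset α)
    (h : s.card = t.card) (a1 a2 b1 a1' a2' b1' : α)
    (ha1 : a1 ∉ s) (ha2 : a2 ∉ s) (h12 : a1 ≠ a2) (hb1 : b1 ∈ s)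
    (ha1' : a1' ∉ t) (ha2' : a2' ∉ t) (h12' : a1' ≠ a2') (hb1' : b1' ∈ t) :
    ∃ σ : Equiv.Perm α, s.image σ = t ∧ σ a1 = a1' ∧ σ a2 = a2' ∧ σ b1 = b1' := by
  obtain ⟨σ0, hσ0⟩ := exists_perm_image s t h
  have hσ0a1 : σ0 a1 ∉ t := fun hc => ha1 ((mem_iff_of_image hσ0).mpr hc)
  let σ1 : Equiv.Perm α := σ0.trans (Equiv.swap (σ0 a1) a1')
  have hσ1 : s.image σ1 = t := by
    rw [image_trans, hσ0]
    exact swap_image _ _ t (iff_of_false hσ0a1 ha1')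
  have hσ1a1 : σ1 a1 = a1' := Equiv.swap_apply_left _ _
  have hσ1a2 : σ1 a2 ∉ t := fun hc => ha2 ((mem_iff_of_image hσ1).mpr hc)
  let σ2 : Equiv.Perm α := σ1.trans (Equiv.swap (σ1 a2) a2')
  have hσ2 : s.image σ2 = t := by
    rw [image_trans, hσ1]
    exact swap_image _ _ t (iff_of_false hσ1a2 ha2')
  have hσ2a2 : σ2 a2 = a2' := Equiv.swap_apply_left _ _
  have hne1 : a1' ≠ σ1 a2 := fun hc => h12 (σ1.injective (hσ1a1.trans hc))
  have hσ2a1 : σ2 a1 = a1' := by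
    show Equiv.swap (σ1 a2) a2' (σ1 a1) = a1'
    rw [hσ1a1]
    exact Equiv.swap_apply_of_ne_of_ne hne1 h12'
  have hσ2b1 : σ2 b1 ∈ t := (mem_iff_of_image hσ2).mp hb1
  let σ3 : Equiv.Perm α := σ2.trans (Equiv.swap (σ2 b1) b1')
  have hσ3 : s.image σ3 = t := by
    rw [image_trans, hσ2]
    exact swap_image _ _ t (iff_of_true hσ2b1 hb1')
  have hσ3b1 : σ3 b1 = b1' := Equiv.swap_apply_left _ _
  have hσ3a1 : σ3 a1 = a1' := by
    show Equiv.swap (σ2 b1) b1' (σ2 a1) = a1'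
    rw [hσ2a1]
    exact Equiv.swap_apply_of_ne_of_ne
      (fun hc => ha1' (by rw [hc]; exact hσ2b1))
      (fun hc => ha1' (by rw [hc]; exact hb1'))
  have hσ3a2 : σ3 a2 = a2' := by
    show Equiv.swap (σ2 b1) b1' (σ2 a2) = a2'
    rw [hσ2a2]
    exact Equiv.swap_apply_of_ne_of_ne
      (fun hc => ha2' (by rw [hc]; exact hσ2b1))
      (fun hc => ha2' (by rw [hc]; exact hb1'))
  exact ⟨σ3, hσ3, hσ3a1, hσ3a2, hσ3b1⟩

/-- structure of a 3-arc -/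
lemma three_arc_struct (hk : 1 ≤ k) {u0 u1 u2 u3 : OV k}
    (h01 : (oddGraph k).Adj u0 u1) (h12 : (oddGraph k).Adj u1 u2)
    (h23 : (oddGraph k).Adj u2 u3) (h02 : u0 ≠ u2) (h13 : u1 ≠ u3) :
    ∃ a1 a2 b1, a1 ∈ u0.1ᶜ ∧ a2 ∈ u0.1ᶜ ∧ a1 ≠ a2 ∧ b1 ∈ u0.1 ∧
      u1.1 = u0.1ᶜ.erase a1 ∧
      u2.1 = (insert a1 u0.1).erase b1 ∧
      u3.1 = (insert b1 (u0.1ᶜ.erase a1)).erase a2 := by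
  obtain ⟨a1, ha1, hu1, _⟩ := adj_struct hk h01
  obtain ⟨z, hz, hu2, _⟩ := adj_struct hk h12
  obtain ⟨a2, ha2m, hu3, _⟩ := adj_struct hk h23
  have hu1c : u1.1ᶜ = insert a1 u0.1 := by
    rw [hu1, Finset.compl_erase, compl_compl]
  have hz' : z ∈ insert a1 u0.1 := by rwa [hu1c] at hz
  have ha1nu0 : a1 ∉ u0.1 := Finset.mem_compl.mp ha1
  have hzne : z ≠ a1 := by
    intro hc
    subst hc
    apply h02
    apply Subtype.ext
    rw [hu2, hu1c, Finset.erase_insert ha1nu0]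
  have hzu0 : z ∈ u0.1 := by
    rcases Finset.mem_insert.mp hz' with hc | hc
    · exact absurd hc hzne
    · exact hc
  have hu2' : u2.1 = (insert a1 u0.1).erase z := by rw [hu2, hu1c]
  have hu2c : u2.1ᶜ = insert z (u0.1ᶜ.erase a1) := by
    rw [hu2', Finset.compl_erase, Finset.compl_insert]
  have ha2m' : a2 ∈ insert z (u0.1ᶜ.erase a1) := by rwa [hu2c] at ha2m
  have hzne2 : a2 ≠ z := by
    intro hc
    subst hc
    apply h13
    apply Subtype.ext
    rw [hu3, hu2c, Finset.erase_insert, hu1]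
    intro hcc
    exact (Finset.mem_compl.mp (Finset.mem_of_mem_erase hcc)) hzu0
  have ha2e : a2 ∈ u0.1ᶜ.erase a1 := by
    rcases Finset.mem_insert.mp ha2m' with hc | hc
    · exact absurd hc hzne2
    · exact hc
  refine ⟨a1, a2, z, ha1, Finset.mem_of_mem_erase ha2e, ?_, hzu0, hu1, hu2', ?_⟩
  · exact fun hc => (Finset.mem_erase.mp ha2e).1 hc.symm
  · rw [hu3, hu2c]

lemma three_arc_transitive (hk : 1 ≤ k) (u0 u1 u2 u3 v0 v1 v2 v3 : OV k)
    (hu : (oddGraph k).Adj u0 u1 ∧ (oddGraph k).Adj u1 u2 ∧ (oddGraph k).Adj u2 u3 ∧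
      u0 ≠ u2 ∧ u1 ≠ u3)
    (hv : (oddGraph k).Adj v0 v1 ∧ (oddGraph k).Adj v1 v2 ∧ (oddGraph k).Adj v2 v3 ∧
      v0 ≠ v2 ∧ v1 ≠ v3) :
    ∃ g ∈ (oddGraph k).autGroup, g u0 = v0 ∧ g u1 = v1 ∧ g u2 = v2 ∧ g u3 = v3 := by
  obtain ⟨a1, a2, b1, ha1, ha2, h12, hb1, hu1, hu2, hu3⟩ :=
    three_arc_struct hk hu.1 hu.2.1 hu.2.2.1 hu.2.2.2.1 hu.2.2.2.2
  obtain ⟨a1', a2', b1', ha1', ha2', h12', hb1', hv1, hv2, hv3⟩ :=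
    three_arc_struct hk hv.1 hv.2.1 hv.2.2.1 hv.2.2.2.1 hv.2.2.2.2
  obtain ⟨σ, hσ, hσa1, hσa2, hσb1⟩ := exists_perm_data u0.1 v0.1
    (by rw [u0.2, v0.2]) a1 a2 b1 a1' a2' b1'
    (Finset.mem_compl.mp ha1) (Finset.mem_compl.mp ha2) h12 hb1
    (Finset.mem_compl.mp ha1') (Finset.mem_compl.mp ha2') h12' hb1'
  refine ⟨vmapPerm σ, vmapPerm_mem_aut σ, Subtype.ext hσ, ?_, ?_, ?_⟩
  · apply Subtype.ext
    show u1.1.image σ = v1.1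
    rw [hu1, Finset.image_erase σ.injective, perm_image_compl, hσ, hσa1, hv1]
  · apply Subtype.ext
    show u2.1.image σ = v2.1
    rw [hu2, Finset.image_erase σ.injective, Finset.image_insert, hσ, hσa1, hσb1, hv2]
  · apply Subtype.ext
    show u3.1.image σ = v3.1
    rw [hu3, Finset.image_erase σ.injective, Finset.image_insert,
      Finset.image_erase σ.injective, perm_image_compl, hσ, hσa1, hσa2, hσb1, hv3]

end OddAux

/-- For `k ≥ 2`, the Odd graph `O_k` has diameter `k` and is
geodesic transitive and `3`-arc transitive: its automorphism group is transitive on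
the vertices, on the `i`-geodesics for all `1 ≤ i ≤ k`, and on the `3`-arcs. -/
theorem oddGraph_geodesic_and_three_arc_transitive (k : ℕ) (hk : 2 ≤ k) :
    (oddGraph k).diam = k ∧
    (oddGraph k).GeodesicTransitiveOn (oddGraph k).autGroup k ∧
    ∀ u₀ u₁ u₂ u₃ v₀ v₁ v₂ v₃ : {s : Finset (Fin (2 * k + 1)) // s.card = k},
      ((oddGraph k).Adj u₀ u₁ ∧ (oddGraph k).Adj u₁ u₂ ∧ (oddGraph k).Adj u₂ u₃ ∧
        u₀ ≠ u₂ ∧ u₁ ≠ u₃) →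
      ((oddGraph k).Adj v₀ v₁ ∧ (oddGraph k).Adj v₁ v₂ ∧ (oddGraph k).Adj v₂ v₃ ∧
        v₀ ≠ v₂ ∧ v₁ ≠ v₃) →
      ∃ g ∈ (oddGraph k).autGroup, g u₀ = v₀ ∧ g u₁ = v₁ ∧ g u₂ = v₂ ∧ g u₃ = v₃ := by
  have hk1 : 1 ≤ k := by omega
  refine ⟨OddAux.diam_eq hk1, ⟨fun U W => OddAux.vertex_transitive hk1 U W, ?_⟩, ?_⟩
  · intro i hi1 hik
    exact ⟨OddAux.exists_geodesic hk1 i hik,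
      fun u w hu hw => OddAux.geodesic_transitive hk1 hik u w hu hw⟩
  · intro u₀ u₁ u₂ u₃ v₀ v₁ v₂ v₃ hu hv
    exact OddAux.three_arc_transitive hk1 u₀ u₁ u₂ u₃ v₀ v₁ v₂ v₃ hu hv
end
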